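/- Let p > 7 be a prime. Then the set of prime numbers q for which there exists k ∈ ZMod p with k ≠ 0 such that the curve y² = x³ + k over F_p has exactly q points (including the point at infinity) has at most 2 elements, and every prime q in this set satisfies q ≡ 1 (mod 3). -/

import Mathlib

open Finset Polynomial

/-- The number of `F_p`-rational points, including the point at infinity, of the elliptic curve
`y² = x³ + k` over `F_p`. -/
noncomputable def Npts (p : ℕ) (k : ZMod p) : ℕ :=
  Nat.card (WeierstrassCurve.Affine.Point
    (WeierstrassCurve.toAffine ⟨0, 0, 0, 0, k⟩))

def Aff (p : ℕ) [Fact p.Prime] (k : ZMod p) : Finset (ZMod p × ZMod p) :=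
  Finset.univ.filter fun P => P.2 ^ 2 = P.1 ^ 3 + k

def nsq (p : ℕ) [Fact p.Prime] (v : ZMod p) : ℕ :=
  (Finset.univ.filter fun y : ZMod p => y ^ 2 = v).card

def ncb (p : ℕ) [Fact p.Prime] (v : ZMod p) : ℕ :=
  (Finset.univ.filter fun x : ZMod p => x ^ 3 = v).card

variable {p : ℕ} [Fact p.Prime]

lemma two_ne_zero'' (hp7 : 7 < p) : (2 : ZMod p) ≠ 0 := by
  have h : ((2 : ℕ) : ZMod p) = 0 ↔ p ∣ 2 := CharP.cast_eq_zero_iff (ZMod p) p 2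
  intro h0
  have : p ∣ 2 := h.mp (by exact_mod_cast h0)
  have := Nat.le_of_dvd (by norm_num) this
  omega

lemma nsq_eq (hp7 : 7 < p) (v : ZMod p) :
    nsq p v = if v = 0 then 1 else if IsSquare v then 2 else 0 := by
  unfold nsq
  split_ifs with h1 h2
  · subst h1
    rw [Finset.card_eq_one]
    exact ⟨0, by ext y; simp [pow_eq_zero_iff]⟩
  · obtain ⟨c, hc⟩ := h2
    have hc' : v = c ^ 2 := by rw [hc]; ring
    have hcne : c ≠ 0 := by rintro rfl; rw [hc'] at h1; simp at h1
    have hfe : (Finset.univ.filter fun y : ZMod p => y ^ 2 = v) = {c, -c} := by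
      ext y
      simp only [Finset.mem_filter, Finset.mem_univ, true_and, Finset.mem_insert,
        Finset.mem_singleton]
      constructor
      · intro hy
        have : (y - c) * (y + c) = 0 := by linear_combination hy + hc'
        rcases mul_eq_zero.mp this with h | h
        · left; exact sub_eq_zero.mp h
        · right; exact eq_neg_of_add_eq_zero_left h
      · rintro (rfl | rfl)
        · exact hc'.symm
        · rw [hc']; ring
    rw [hfe, Finset.card_insert_of_notMem (by
      simp only [Finset.mem_singleton]
      intro h
      have h2 : (2 : ZMod p) * c = 0 := by linear_combination h
      rcases mul_eq_zero.mp h2 with h' | h'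
      · exact two_ne_zero'' hp7 h'
      · exact hcne h'), Finset.card_singleton]
  · rw [Finset.card_eq_zero, Finset.filter_eq_empty_iff]
    intro y _
    exact fun hy => h2 ⟨y, by rw [← hy]; ring⟩

lemma exists_cubeRoot (h3 : p % 3 = 1) (hp7 : 7 < p) : ∃ ζ : ZMod p, IsPrimitiveRoot ζ 3 := by
  have hdvd : 3 ∣ Fintype.card (ZMod p)ˣ := by
    rw [ZMod.card_units]; omega
  obtain ⟨ζu, hord⟩ := exists_prime_orderOf_dvd_card 3 hdvd
  refine ⟨(ζu : ZMod p), ?_⟩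
  rw [IsPrimitiveRoot.coe_units_iff]
  exact hord ▸ IsPrimitiveRoot.orderOf ζu

lemma ncb_eq (h3 : p % 3 = 1) (hp7 : 7 < p) (v : ZMod p) :
    ncb p v = if v = 0 then 1 else if ∃ c : ZMod p, c ^ 3 = v then 3 else 0 := by
  obtain ⟨ζ, hζ⟩ := exists_cubeRoot h3 hp7
  unfold ncb
  split_ifs with h1 h2
  · subst h1
    rw [Finset.card_eq_one]
    exact ⟨0, by ext x; simp [pow_eq_zero_iff]⟩
  · obtain ⟨c, hc⟩ := h2
    have hcne : c ≠ 0 := by rintro rfl; rw [← hc] at h1; simp at h1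
    have hfe : (Finset.univ.filter fun x : ZMod p => x ^ 3 = v)
        = (nthRootsFinset 3 (1 : ZMod p)).image (fun z => c * z) := by
      ext x
      simp only [Finset.mem_filter, Finset.mem_univ, true_and, Finset.mem_image]
      constructor
      · intro hx
        refine ⟨x * c⁻¹, ?_, by field_simp⟩
        rw [Polynomial.mem_nthRootsFinset (by norm_num)]
        rw [mul_pow, hx, ← hc, inv_pow, mul_inv_cancel₀ (pow_ne_zero 3 hcne)]
      · rintro ⟨z, hz, rfl⟩
        rw [Polynomial.mem_nthRootsFinset (by norm_num)] at hz
        rw [mul_pow, hz, mul_one, hc]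
    rw [hfe, Finset.card_image_of_injective _ (mul_right_injective₀ hcne),
      hζ.card_nthRootsFinset]
  · rw [Finset.card_eq_zero, Finset.filter_eq_empty_iff]
    exact fun x _ hx => h2 ⟨x, hx⟩

lemma ncb_one (h3 : p % 3 = 2) (v : ZMod p) : ncb p v = 1 := by
  have hinj : Function.Injective (fun x : ZMod p => x ^ 3) := by
    intro a b hab
    simp only at hab
    rcases eq_or_ne b 0 with rfl | hb
    · simpa [pow_eq_zero_iff] using hab
    · have hane : a ≠ 0 := by
        rintro rfl
        exact hb (by simpa [pow_eq_zero_iff, eq_comm] using hab)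
      have ht3 : (a * b⁻¹) ^ 3 = 1 := by
        rw [mul_pow, hab, inv_pow, mul_inv_cancel₀ (pow_ne_zero 3 hb)]
      have hne : a * b⁻¹ ≠ 0 := mul_ne_zero hane (inv_ne_zero hb)
      have h1 : orderOf (a * b⁻¹) ∣ 3 := orderOf_dvd_of_pow_eq_one ht3
      have h2 : orderOf (a * b⁻¹) ∣ p - 1 :=
        orderOf_dvd_of_pow_eq_one (ZMod.pow_card_sub_one_eq_one hne)
      have : orderOf (a * b⁻¹) = 1 := by
        rcases (Nat.prime_three.eq_one_or_self_of_dvd _ h1) with h | h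
        · exact h
        · rw [h] at h2; omega
      have : a * b⁻¹ = 1 := orderOf_eq_one_iff.mp this
      field_simp at this
      exact this
  have hsurj := Finite.surjective_of_injective hinj
  obtain ⟨x₀, hx₀⟩ := hsurj v
  unfold ncb
  rw [Finset.card_eq_one]
  refine ⟨x₀, ?_⟩
  ext x
  simp only [Finset.mem_filter, Finset.mem_univ, true_and, Finset.mem_singleton]
  constructor
  · intro hx; exact hinj (by simpa only [hx₀] using hx)
  · rintro rfl; exact hx₀

lemma Aff_by_x (k : ZMod p) : (Aff p k).card = ∑ x : ZMod p, nsq p (x ^ 3 + k) := by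
  unfold Aff nsq
  rw [Finset.card_filter, ← Finset.univ_product_univ, Finset.sum_product]
  exact Finset.sum_congr rfl fun x _ => (Finset.card_filter _ _).symm

lemma Aff_by_y (k : ZMod p) : (Aff p k).card = ∑ y : ZMod p, ncb p (y ^ 2 - k) := by
  unfold Aff ncb
  rw [Finset.card_filter, ← Finset.univ_product_univ, Finset.sum_product, Finset.sum_comm]
  refine Finset.sum_congr rfl fun y _ => ?_
  rw [Finset.card_filter]
  refine Finset.sum_congr rfl fun x _ => ?_
  congr 1
  simp only [eq_iff_iff]
  constructor
  · intro h; rw [h]; ring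
  · intro h; rw [eq_sub_iff_add_eq] at h; rw [← h]

lemma Aff_mod3 (h3 : p % 3 = 1) (hp7 : 7 < p) (k : ZMod p) :
    (Aff p k).card % 3 = nsq p k % 3 := by
  rw [Aff_by_y, Finset.sum_nat_mod]
  have h1 : ∀ y : ZMod p, ncb p (y ^ 2 - k) % 3 = if y ^ 2 = k then 1 else 0 := by
    intro y
    rw [ncb_eq h3 hp7]
    by_cases hy : y ^ 2 = k
    · rw [if_pos (by rw [hy]; ring), if_pos hy]
    · rw [if_neg (by rw [sub_eq_zero]; exact hy), if_neg hy]
      split_ifs <;> norm_num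
  calc (∑ y : ZMod p, ncb p (y ^ 2 - k) % 3) % 3
      = (∑ y : ZMod p, if y ^ 2 = k then 1 else 0) % 3 := by
        rw [Finset.sum_congr rfl fun y _ => h1 y]
    _ = nsq p k % 3 := by rw [← Finset.card_filter]; rfl

lemma Aff_mod2 (hp7 : 7 < p) (k : ZMod p) :
    (Aff p k).card % 2 = ncb p (-k) % 2 := by
  rw [Aff_by_x, Finset.sum_nat_mod]
  have h1 : ∀ x : ZMod p, nsq p (x ^ 3 + k) % 2 = if x ^ 3 = -k then 1 else 0 := by
    intro x
    rw [nsq_eq hp7]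
    by_cases hx : x ^ 3 = -k
    · rw [if_pos (by rw [hx]; ring), if_pos hx]
    · rw [if_neg (fun h => hx (by linear_combination h)), if_neg hx]
      split_ifs <;> norm_num
  calc (∑ x : ZMod p, nsq p (x ^ 3 + k) % 2) % 2
      = (∑ x : ZMod p, if x ^ 3 = -k then 1 else 0) % 2 := by
        rw [Finset.sum_congr rfl fun x _ => h1 x]
    _ = ncb p (-k) % 2 := by rw [← Finset.card_filter]; rfl

lemma sum_nsq : ∑ v : ZMod p, nsq p v = p := by
  have h := Finset.card_eq_sum_card_fiberwise (f := fun y : ZMod p => y ^ 2)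
    (s := Finset.univ) (t := Finset.univ) (fun x _ => Finset.mem_univ _)
  rw [Finset.card_univ, ZMod.card] at h
  exact h.symm

lemma sum_Aff : ∑ k : ZMod p, (Aff p k).card = p ^ 2 := by
  calc ∑ k : ZMod p, (Aff p k).card = ∑ k : ZMod p, ∑ x : ZMod p, nsq p (x ^ 3 + k) := by
        exact Finset.sum_congr rfl fun k _ => Aff_by_x k
    _ = ∑ x : ZMod p, ∑ k : ZMod p, nsq p (x ^ 3 + k) := Finset.sum_comm
    _ = ∑ x : ZMod p, ∑ v : ZMod p, nsq p v := by
        refine Finset.sum_congr rfl fun x _ => ?_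
        exact Equiv.sum_comp (Equiv.addLeft (x ^ 3)) (fun v => nsq p v)
    _ = ∑ x : ZMod p, p := by rw [Finset.sum_congr rfl fun x _ => sum_nsq]
    _ = p ^ 2 := by simp [ZMod.card]; ring

lemma uv_count {d : ZMod p} (hd : d ≠ 0) :
    (Finset.univ.filter fun P : ZMod p × ZMod p => P.1 * P.2 = d).card = p - 1 := by
  have : (Finset.univ.filter fun P : ZMod p × ZMod p => P.1 * P.2 = d)
      = (Finset.univ.erase (0 : ZMod p)).image (fun u => (u, d * u⁻¹)) := by
    ext ⟨u, v⟩
    simp only [Finset.mem_filter, Finset.mem_univ, true_and, Finset.mem_image,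
      Finset.mem_erase, Prod.mk.injEq]
    constructor
    · intro h
      have hu : u ≠ 0 := by rintro rfl; rw [zero_mul] at h; exact hd h.symm
      exact ⟨u, ⟨hu, trivial⟩, rfl, by rw [← h]; field_simp⟩
    · rintro ⟨w, ⟨hw, -⟩, rfl, rfl⟩
      field_simp
  rw [this, Finset.card_image_of_injective _ (fun a b hab => (Prod.mk.injEq .. ▸ hab).1),
    Finset.card_erase_of_mem (Finset.mem_univ _), Finset.card_univ, ZMod.card]

lemma hyper_count (hp7 : 7 < p) {d : ZMod p} (hd : d ≠ 0) :
    (Finset.univ.filter fun Y : ZMod p × ZMod p => Y.2 ^ 2 - Y.1 ^ 2 = d).card = p - 1 := by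
  rw [← uv_count hd]
  apply Finset.card_bij (fun Y _ => (Y.2 - Y.1, Y.2 + Y.1))
  · rintro ⟨y, y'⟩ hY
    simp only [Finset.mem_filter, Finset.mem_univ, true_and] at hY ⊢
    linear_combination hY
  · rintro ⟨y, y'⟩ hY ⟨z, z'⟩ hZ h
    simp only [Prod.mk.injEq] at h ⊢
    have h2 := two_ne_zero'' hp7
    constructor
    · have : (2 : ZMod p) * y = 2 * z := by linear_combination h.2 - h.1
      exact mul_left_cancel₀ h2 this
    · have : (2 : ZMod p) * y' = 2 * z' := by linear_combination h.2 + h.1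
      exact mul_left_cancel₀ h2 this
  · rintro ⟨u, v⟩ hP
    simp only [Finset.mem_filter, Finset.mem_univ, true_and] at hP
    have h2 := two_ne_zero'' hp7
    refine ⟨((v - u) / 2, (v + u) / 2), ?_, ?_⟩
    · simp only [Finset.mem_filter, Finset.mem_univ, true_and]
      field_simp
      linear_combination (4 : ZMod p) * hP
    · simp only [Prod.mk.injEq]
      constructor <;> (field_simp; ring)

lemma sq_pair_count (hp7 : 7 < p) :
    (Finset.univ.filter fun Y : ZMod p × ZMod p => Y.2 ^ 2 - Y.1 ^ 2 = 0).card = 2 * p - 1 := by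
  have hA : (Finset.univ.filter fun Y : ZMod p × ZMod p => Y.2 ^ 2 - Y.1 ^ 2 = 0)
      = (Finset.univ.image fun y : ZMod p => (y, y)) ∪
        (Finset.univ.image fun y : ZMod p => (y, -y)) := by
    ext ⟨y, y'⟩
    simp only [Finset.mem_filter, Finset.mem_univ, true_and, Finset.mem_union,
      Finset.mem_image, Prod.mk.injEq]
    constructor
    · intro h
      have : (y' - y) * (y' + y) = 0 := by linear_combination h
      rcases mul_eq_zero.mp this with h' | h'
      · exact Or.inl ⟨y, rfl, (sub_eq_zero.mp h').symm⟩
      · exact Or.inr ⟨y, rfl, by linear_combination -h'⟩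
    · rintro (⟨t, rfl, rfl⟩ | ⟨t, rfl, rfl⟩) <;> ring
  have hinter : ((Finset.univ.image fun y : ZMod p => (y, y)) ∩
      (Finset.univ.image fun y : ZMod p => (y, -y))) = {((0 : ZMod p), (0 : ZMod p))} := by
    ext ⟨y, y'⟩
    simp only [Finset.mem_inter, Finset.mem_image, Finset.mem_univ, true_and,
      Finset.mem_singleton, Prod.mk.injEq]
    constructor
    · rintro ⟨⟨t, rfl, rfl⟩, ⟨s, rfl, hs⟩⟩
      have : (2 : ZMod p) * s = 0 := by linear_combination -hs
      rcases mul_eq_zero.mp this with h' | h'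
      · exact absurd h' (two_ne_zero'' hp7)
      · exact ⟨h'.symm ▸ rfl, h'.symm ▸ rfl⟩
    · rintro ⟨rfl, rfl⟩
      exact ⟨⟨0, rfl, rfl⟩, ⟨0, rfl, by rw [neg_zero]⟩⟩
  have hinj1 : Function.Injective (fun y : ZMod p => (y, y)) :=
    fun a b hab => (Prod.mk.injEq .. ▸ hab).1
  have hinj2 : Function.Injective (fun y : ZMod p => (y, -y)) :=
    fun a b hab => (Prod.mk.injEq .. ▸ hab).1
  have := Finset.card_union_add_card_inter
    (Finset.univ.image fun y : ZMod p => (y, y))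
    (Finset.univ.image fun y : ZMod p => (y, -y))
  rw [hinter, Finset.card_singleton, Finset.card_image_of_injective _ hinj1,
    Finset.card_image_of_injective _ hinj2, Finset.card_univ, ZMod.card] at this
  rw [hA]
  omega

lemma conv_count (hp7 : 7 < p) (d : ZMod p) :
    ∑ v : ZMod p, nsq p v * nsq p (v + d) = if d = 0 then 2 * p - 1 else p - 1 := by
  have key := Finset.card_eq_sum_card_fiberwise (f := fun Y : ZMod p × ZMod p => Y.1 ^ 2)
    (s := Finset.univ.filter fun Y : ZMod p × ZMod p => Y.2 ^ 2 - Y.1 ^ 2 = d)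
    (t := Finset.univ) (fun x _ => Finset.mem_univ _)
  have hfib : ∀ v : ZMod p,
      ((Finset.univ.filter fun Y : ZMod p × ZMod p => Y.2 ^ 2 - Y.1 ^ 2 = d).filter
        fun Y => Y.1 ^ 2 = v).card = nsq p v * nsq p (v + d) := by
    intro v
    have : ((Finset.univ.filter fun Y : ZMod p × ZMod p => Y.2 ^ 2 - Y.1 ^ 2 = d).filter
          fun Y => Y.1 ^ 2 = v)
        = (Finset.univ.filter fun y : ZMod p => y ^ 2 = v) ×ˢ
          (Finset.univ.filter fun y : ZMod p => y ^ 2 = v + d) := by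
      ext ⟨a, b⟩
      simp only [Finset.mem_filter, Finset.mem_univ, true_and, Finset.mem_product]
      constructor
      · rintro ⟨h1, h2⟩
        exact ⟨h2, by rw [← h2]; linear_combination h1⟩
      · rintro ⟨h1, h2⟩
        exact ⟨by rw [h1, h2]; ring, h1⟩
    rw [this, Finset.card_product]
    rfl
  rw [Finset.sum_congr rfl (fun v _ => (hfib v).symm), ← key]
  split_ifs with h
  · rw [h, sq_pair_count hp7]
  · rw [hyper_count hp7 h]

lemma cube_pairs (h3 : p % 3 = 1) (hp7 : 7 < p) :
    (Finset.univ.filter fun X : ZMod p × ZMod p => X.1 ^ 3 = X.2 ^ 3).card = 3 * p - 2 := by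
  have h1 : (Finset.univ.filter fun X : ZMod p × ZMod p => X.1 ^ 3 = X.2 ^ 3).card
      = ∑ x' : ZMod p, ncb p (x' ^ 3) := by
    rw [Finset.card_filter, ← Finset.univ_product_univ, Finset.sum_product, Finset.sum_comm]
    refine Finset.sum_congr rfl fun x' _ => ?_
    rw [ncb, Finset.card_filter]
  rw [h1, ← Finset.add_sum_erase _ _ (Finset.mem_univ (0 : ZMod p))]
  have h2 : ncb p ((0 : ZMod p) ^ 3) = 1 := by
    rw [ncb_eq h3 hp7, if_pos (by norm_num)]
  have h3' : ∀ x' ∈ Finset.univ.erase (0 : ZMod p), ncb p (x' ^ 3) = 3 := by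
    intro x' hx'
    have hne : x' ≠ 0 := (Finset.mem_erase.mp hx').1
    rw [ncb_eq h3 hp7, if_neg (pow_ne_zero 3 hne), if_pos ⟨x', rfl⟩]
  rw [Finset.sum_congr rfl h3', Finset.sum_const, h2,
    Finset.card_erase_of_mem (Finset.mem_univ _), Finset.card_univ, ZMod.card, smul_eq_mul]
  omega

lemma sum_Aff_sq (h3 : p % 3 = 1) (hp7 : 7 < p) :
    ∑ k : ZMod p, ((Aff p k).card : ℤ) ^ 2 = p ^ 3 + 2 * p ^ 2 - 2 * p := by
  have step1 : ∀ k : ZMod p, ((Aff p k).card : ℤ) ^ 2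
      = ∑ x : ZMod p, ∑ x' : ZMod p, (nsq p (x ^ 3 + k) : ℤ) * nsq p (x' ^ 3 + k) := by
    intro k
    rw [Aff_by_x, sq, ← Finset.sum_mul_sum]
    push_cast
    rfl
  rw [Finset.sum_congr rfl fun k _ => step1 k, Finset.sum_comm,
    Finset.sum_congr rfl fun x (_ : x ∈ Finset.univ) => Finset.sum_comm]
  have step2 : ∀ x x' : ZMod p, ∑ k : ZMod p, (nsq p (x ^ 3 + k) : ℤ) * nsq p (x' ^ 3 + k)
      = ((p : ℤ) - 1) + (if x ^ 3 = x' ^ 3 then (p : ℤ) else 0) := by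
    intro x x'
    have e1 : ∑ k : ZMod p, (nsq p (x ^ 3 + k) : ℤ) * nsq p (x' ^ 3 + k)
        = ∑ v : ZMod p, (nsq p v : ℤ) * nsq p (v + (x' ^ 3 - x ^ 3)) := by
      rw [← Equiv.sum_comp (Equiv.addLeft (x ^ 3))
        (fun v => (nsq p v : ℤ) * nsq p (v + (x' ^ 3 - x ^ 3)))]
      refine Finset.sum_congr rfl fun k _ => ?_
      simp only [Equiv.coe_addLeft]
      have harg : (x ^ 3 + k) + (x' ^ 3 - x ^ 3) = x' ^ 3 + k := by ring
      rw [harg]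
    have e2 : ∑ v : ZMod p, (nsq p v : ℤ) * nsq p (v + (x' ^ 3 - x ^ 3))
        = ((∑ v : ZMod p, nsq p v * nsq p (v + (x' ^ 3 - x ^ 3)) : ℕ) : ℤ) := by
      push_cast
      rfl
    rw [e1, e2, conv_count hp7]
    by_cases hxx : x ^ 3 = x' ^ 3
    · rw [if_pos (by rw [hxx, sub_self]), if_pos hxx, Nat.cast_sub (by omega)]
      push_cast
      ring
    · rw [if_neg (fun h => hxx (by linear_combination -h)), if_neg hxx,
        Nat.cast_sub (by omega)]
      push_cast
      ring
  rw [Finset.sum_congr rfl fun x _ =>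
    Finset.sum_congr rfl fun x' _ => step2 x x']
  have split : ∑ x : ZMod p, ∑ x' : ZMod p,
        (((p : ℤ) - 1) + (if x ^ 3 = x' ^ 3 then (p : ℤ) else 0))
      = (p : ℤ) * p * (p - 1)
        + ∑ x : ZMod p, ∑ x' : ZMod p, (if x ^ 3 = x' ^ 3 then (p : ℤ) else 0) := by
    rw [Finset.sum_congr rfl fun x (_ : x ∈ Finset.univ) => Finset.sum_add_distrib]
    rw [Finset.sum_add_distrib]
    congr 1
    simp [Finset.sum_const, Finset.card_univ, ZMod.card]
    ring
  rw [split]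
  have cnt : ∑ x : ZMod p, ∑ x' : ZMod p, (if x ^ 3 = x' ^ 3 then (p : ℤ) else 0)
      = (p : ℤ) * (3 * p - 2) := by
    rw [← Finset.sum_product']
    rw [Finset.univ_product_univ]
    rw [← Finset.sum_filter]
    rw [Finset.sum_const]
    rw [cube_pairs h3 hp7, nsmul_eq_mul, Nat.cast_sub (by omega)]
    push_cast
    ring
  rw [cnt]
  ring

lemma var_Aff (h3 : p % 3 = 1) (hp7 : 7 < p) :
    ∑ k : ZMod p, (((Aff p k).card : ℤ) - p) ^ 2 = 2 * p ^ 2 - 2 * p := by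
  have h1 : (∑ k : ZMod p, ((Aff p k).card : ℤ)) = (p : ℤ) ^ 2 := by
    exact_mod_cast congrArg (Nat.cast : ℕ → ℤ) (sum_Aff (p := p))
  have h2 := sum_Aff_sq h3 hp7
  have expand : ∀ k : ZMod p, (((Aff p k).card : ℤ) - p) ^ 2
      = ((Aff p k).card : ℤ) ^ 2 - 2 * p * (Aff p k).card + p ^ 2 := fun k => by ring
  rw [Finset.sum_congr rfl fun k _ => expand k, Finset.sum_add_distrib,
    Finset.sum_sub_distrib, ← Finset.mul_sum, Finset.sum_const, Finset.card_univ,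
    ZMod.card, h1, h2, nsmul_eq_mul]
  ring

lemma one_ne_negone (hp7 : 7 < p) : (1 : ZMod p) ≠ -1 := by
  intro h
  apply two_ne_zero'' hp7
  linear_combination h

lemma euler_pm (hp7 : 7 < p) {a : ZMod p} (ha : a ≠ 0) :
    a ^ (p / 2) = 1 ∨ a ^ (p / 2) = -1 := by
  have hsq : (a ^ (p / 2)) ^ 2 = 1 := by
    rw [← pow_mul]
    have : p / 2 * 2 = p - 1 := by
      rcases (Fact.out : p.Prime).eq_two_or_odd with h | h
      · omega
      · omega
    rw [this]
    exact ZMod.pow_card_sub_one_eq_one ha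
  have : (a ^ (p / 2) - 1) * (a ^ (p / 2) + 1) = 0 := by linear_combination hsq
  rcases mul_eq_zero.mp this with h | h
  · exact Or.inl (by linear_combination h)
  · exact Or.inr (by linear_combination h)

lemma euler_neg (hp7 : 7 < p) {a : ZMod p} (ha : a ≠ 0) (hns : ¬IsSquare a) :
    a ^ (p / 2) = -1 := by
  rcases euler_pm hp7 ha with h | h
  · exact absurd ((ZMod.euler_criterion p ha).mpr h) hns
  · exact h

lemma sq_xor (hp7 : 7 < p) {d w : ZMod p} (hd : ¬IsSquare d) (hw : w ≠ 0) :
    IsSquare (d ^ 3 * w) ↔ ¬IsSquare w := by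
  have hd0 : d ≠ 0 := fun h => hd (h ▸ ⟨0, by ring⟩)
  have hdw : d ^ 3 * w ≠ 0 := mul_ne_zero (pow_ne_zero _ hd0) hw
  have hed := euler_neg hp7 hd0 hd
  have key : (d ^ 3 * w) ^ (p / 2) = - w ^ (p / 2) := by
    rw [mul_pow, ← pow_mul, mul_comm 3 (p / 2), pow_mul, hed]
    ring
  constructor
  · intro hsq hwsq
    have h1 := (ZMod.euler_criterion p hdw).mp hsq
    have h2 := (ZMod.euler_criterion p hw).mp hwsq
    rw [key, h2] at h1
    exact one_ne_negone hp7 (by linear_combination -h1)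
  · intro hns
    rw [ZMod.euler_criterion p hdw, key, euler_neg hp7 hw hns]
    ring

lemma nsq_twist_add (hp7 : 7 < p) {d : ZMod p} (hd : ¬IsSquare d) (w : ZMod p) :
    nsq p w + nsq p (d ^ 3 * w) = 2 := by
  rcases eq_or_ne w 0 with rfl | hw
  · rw [mul_zero, nsq_eq hp7, if_pos rfl]
  · have hd0 : d ≠ 0 := fun h => hd (h ▸ ⟨0, by ring⟩)
    have hdw : d ^ 3 * w ≠ 0 := mul_ne_zero (pow_ne_zero _ hd0) hw
    rw [nsq_eq hp7, nsq_eq hp7, if_neg hw, if_neg hdw]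
    by_cases hsq : IsSquare w
    · rw [if_pos hsq, if_neg (fun h => ((sq_xor hp7 hd hw).mp h) hsq)]
    · rw [if_neg hsq, if_pos ((sq_xor hp7 hd hw).mpr hsq)]

lemma Aff_twist (hp7 : 7 < p) {d : ZMod p} (hd : ¬IsSquare d) (k : ZMod p) :
    (Aff p k).card + (Aff p (d ^ 3 * k)).card = 2 * p := by
  have hd0 : d ≠ 0 := fun h => hd (h ▸ ⟨0, by ring⟩)
  have h2 : (Aff p (d ^ 3 * k)).card = ∑ x : ZMod p, nsq p (d ^ 3 * (x ^ 3 + k)) := by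
    rw [Aff_by_x]
    rw [← Equiv.sum_comp (Equiv.mulLeft₀ d hd0) (fun x => nsq p (x ^ 3 + d ^ 3 * k))]
    refine Finset.sum_congr rfl fun x _ => ?_
    simp only [Equiv.mulLeft₀_apply]
    have : (d * x) ^ 3 + d ^ 3 * k = d ^ 3 * (x ^ 3 + k) := by ring
    rw [this]
  rw [Aff_by_x, h2, ← Finset.sum_add_distrib]
  rw [Finset.sum_congr rfl fun x _ => nsq_twist_add hp7 hd (x ^ 3 + k)]
  rw [Finset.sum_const, Finset.card_univ, ZMod.card, smul_eq_mul]
  ring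

lemma Aff_sextic {u : ZMod p} (hu : u ≠ 0) (k : ZMod p) :
    (Aff p (u ^ 6 * k)).card = (Aff p k).card := by
  set v : ZMod p := u⁻¹ with hvdef
  have hv : v ≠ 0 := inv_ne_zero hu
  have hv2 : v ^ 2 * u ^ 2 = 1 := by rw [hvdef]; field_simp
  have hv3 : v ^ 3 * u ^ 3 = 1 := by rw [hvdef]; field_simp
  have hv6 : v ^ 6 * u ^ 6 = 1 := by rw [hvdef]; field_simp
  apply Finset.card_bij (fun P _ => (v ^ 2 * P.1, v ^ 3 * P.2))
  · rintro ⟨x, y⟩ hP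
    simp only [Aff, Finset.mem_filter, Finset.mem_univ, true_and] at hP ⊢
    linear_combination v ^ 6 * hP + k * hv6
  · rintro ⟨x, y⟩ - ⟨x', y'⟩ - h
    simp only [Prod.mk.injEq] at h ⊢
    exact ⟨mul_left_cancel₀ (pow_ne_zero 2 hv) h.1, mul_left_cancel₀ (pow_ne_zero 3 hv) h.2⟩
  · rintro ⟨x, y⟩ hP
    simp only [Aff, Finset.mem_filter, Finset.mem_univ, true_and] at hP
    refine ⟨(u ^ 2 * x, u ^ 3 * y), ?_, ?_⟩
    · simp only [Aff, Finset.mem_filter, Finset.mem_univ, true_and]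
      linear_combination u ^ 6 * hP
    · simp only [Prod.mk.injEq]
      constructor
      · linear_combination x * hv2 - x * mul_comm (v ^ 2) (u ^ 2) + x * mul_comm (u ^ 2) (v ^ 2)
      · linear_combination y * hv3

theorem Npts_eq {p : ℕ} [Fact p.Prime] (hp7 : 7 < p) (k : ZMod p) (hk : k ≠ 0) :
    Npts p k = (Aff p k).card + 1 := by
  classical
  have hp := (Fact.out : p.Prime)
  set W : WeierstrassCurve.Affine (ZMod p) := WeierstrassCurve.toAffine ⟨0, 0, 0, 0, k⟩ with hW
  have hΔval : W.Δ = -432 * k ^ 2 := by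
    simp [hW, WeierstrassCurve.toAffine, WeierstrassCurve.Δ, WeierstrassCurve.b₂,
      WeierstrassCurve.b₄, WeierstrassCurve.b₆, WeierstrassCurve.b₈]
    ring
  have h432 : (432 : ZMod p) ≠ 0 := by
    have : ((432 : ℕ) : ZMod p) = 0 ↔ p ∣ 432 := CharP.cast_eq_zero_iff (ZMod p) p 432
    intro h
    have hdvd : p ∣ 432 := by
      apply this.mp; exact_mod_cast h
    have : p ∣ 2 ^ 4 * 3 ^ 3 := by norm_num at hdvd ⊢; exact hdvd
    rcases (Nat.Prime.dvd_mul hp).mp this with h' | h'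
    · have := Nat.le_of_dvd (by norm_num) (hp.dvd_of_dvd_pow h'); omega
    · have := Nat.le_of_dvd (by norm_num) (hp.dvd_of_dvd_pow h'); omega
  have hΔ : W.Δ ≠ 0 := by
    rw [hΔval]
    intro h
    rcases mul_eq_zero.mp h with h' | h'
    · exact h432 (by linear_combination -h')
    · exact hk (pow_eq_zero_iff (by norm_num)|>.mp h')
  have hEq : ∀ x y : ZMod p, W.Equation x y ↔ y ^ 2 = x ^ 3 + k := by
    intro x y
    rw [WeierstrassCurve.Affine.equation_iff]
    simp [hW, WeierstrassCurve.toAffine]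
  let e : W.Point ≃ Option {P : ZMod p × ZMod p // P.2 ^ 2 = P.1 ^ 3 + k} :=
  { toFun := fun P => match P with
      | .zero => none
      | @WeierstrassCurve.Affine.Point.some _ _ _ x y h => some ⟨(x, y), (hEq x y).1 h.1⟩
    invFun := fun o => match o with
      | none => .zero
      | some P => .some _ _ ((W.equation_iff_nonsingular_of_Δ_ne_zero hΔ).mp ((hEq P.1.1 P.1.2).2 P.2))
    left_inv := by rintro (_ | _) <;> rfl
    right_inv := by rintro (_ | ⟨⟨x, y⟩, hP⟩) <;> rfl }
  have : Npts p k = Nat.card (Option {P : ZMod p × ZMod p // P.2 ^ 2 = P.1 ^ 3 + k}) :=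
    Nat.card_congr e
  rw [this, Nat.card_eq_fintype_card, Fintype.card_option, Fintype.card_subtype]
  rfl

lemma pow_eq_one_imp {x : ZMod p} (hx : x ≠ 0) {n m : ℕ} (hm : 0 < m)
    (hnm : p - 1 = n * m) (h : x ^ m = 1) : ∃ c : ZMod p, c ≠ 0 ∧ c ^ n = x := by
  obtain ⟨g, hg⟩ := IsCyclic.exists_monoid_generator (α := (ZMod p)ˣ)
  have hord : orderOf g = p - 1 := by
    rw [orderOf_eq_card_of_forall_mem_zpowers
      (fun y => mem_powers_iff_mem_zpowers.mp (hg y)), Nat.card_eq_fintype_card,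
      ZMod.card_units]
  obtain ⟨a, ha⟩ := hg (Units.mk0 x hx)
  have hxa : (g ^ a : (ZMod p)ˣ) = Units.mk0 x hx := ha
  have hpow : (g ^ (a * m) : (ZMod p)ˣ) = 1 := by
    rw [pow_mul, hxa]
    ext
    push_cast
    exact h
  have hdvd : p - 1 ∣ a * m := hord ▸ orderOf_dvd_of_pow_eq_one hpow
  rw [hnm] at hdvd
  obtain ⟨t, ht⟩ := hdvd
  have han : a = n * t := Nat.eq_of_mul_eq_mul_right hm (by rw [ht]; ring)
  refine ⟨((g ^ t : (ZMod p)ˣ) : ZMod p), Units.ne_zero _, ?_⟩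
  have : ((g ^ t) ^ n : (ZMod p)ˣ) = Units.mk0 x hx := by
    rw [← pow_mul, mul_comm t n, ← han, hxa]
  calc ((g ^ t : (ZMod p)ˣ) : ZMod p) ^ n = (((g ^ t) ^ n : (ZMod p)ˣ) : ZMod p) := by push_cast; rfl
    _ = x := by rw [this]; rfl

lemma phi_root (hp7 : 7 < p) (h3 : p % 3 = 1) {k : ZMod p} (hk : k ≠ 0)
    (hsq : ¬IsSquare k) (hcb : ¬∃ c : ZMod p, c ^ 3 = k) :
    (k ^ ((p - 1) / 6)) ^ 2 - k ^ ((p - 1) / 6) + 1 = 0 := by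
  have hodd : p % 2 = 1 := by
    rcases (Fact.out : p.Prime).eq_two_or_odd with h | h
    · omega
    · exact h
  obtain ⟨m, hm⟩ : ∃ m, p - 1 = 6 * m := ⟨(p - 1) / 6, by omega⟩
  have hm6 : (p - 1) / 6 = m := by omega
  rw [hm6]
  set φ : ZMod p := k ^ m with hφ
  have hφ3 : φ ^ 3 = -1 := by
    rw [hφ, ← pow_mul]
    have : m * 3 = p / 2 := by omega
    rw [this]
    exact euler_neg hp7 hk hsq
  have hφ2 : φ ^ 2 ≠ 1 := by
    intro h
    apply hcb
    have : k ^ (2 * m) = 1 := by rw [mul_comm]; rw [hφ, ← pow_mul] at h; exact h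
    obtain ⟨c, _, hc⟩ := pow_eq_one_imp hk (by omega : 0 < 2 * m)
      (by omega : p - 1 = 3 * (2 * m)) this
    exact ⟨c, hc⟩
  have hφne : φ ≠ -1 := by
    intro h
    apply hφ2
    rw [h]
    ring
  have hfac : (φ + 1) * (φ ^ 2 - φ + 1) = 0 := by linear_combination hφ3
  rcases mul_eq_zero.mp hfac with h | h
  · exact absurd (by linear_combination h) hφne
  · exact h

lemma quad_two_eq {a b c : ZMod p} (ha : a ^ 2 - a + 1 = 0) (hb : b ^ 2 - b + 1 = 0)
    (hc : c ^ 2 - c + 1 = 0) : a = b ∨ a = c ∨ b = c := by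
  by_contra h
  push_neg at h
  obtain ⟨hab, hac, hbc⟩ := h
  have h1 : (a - b) * (a + b - 1) = 0 := by linear_combination ha - hb
  have h2 : (a - c) * (a + c - 1) = 0 := by linear_combination ha - hc
  have e1 : a + b - 1 = 0 := by
    rcases mul_eq_zero.mp h1 with h | h
    · exact absurd (sub_eq_zero.mp h) hab
    · exact h
  have e2 : a + c - 1 = 0 := by
    rcases mul_eq_zero.mp h2 with h | h
    · exact absurd (sub_eq_zero.mp h) hac
    · exact h
  exact hbc (by linear_combination e1 - e2)

lemma same_count (hp7 : 7 < p) (h3 : p % 3 = 1) {a b : ZMod p} (ha : a ≠ 0) (hb : b ≠ 0)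
    (hphi : a ^ ((p - 1) / 6) = b ^ ((p - 1) / 6)) :
    (Aff p a).card = (Aff p b).card := by
  have hodd : p % 2 = 1 := by
    rcases (Fact.out : p.Prime).eq_two_or_odd with h | h
    · omega
    · exact h
  obtain ⟨m, hm⟩ : ∃ m, p - 1 = 6 * m := ⟨(p - 1) / 6, by omega⟩
  have hm6 : (p - 1) / 6 = m := by omega
  rw [hm6] at hphi
  have hab : (a * b⁻¹) ^ m = 1 := by
    rw [mul_pow, hphi, inv_pow, mul_inv_cancel₀ (pow_ne_zero m hb)]
  obtain ⟨u, hu, hu6⟩ := pow_eq_one_imp (mul_ne_zero ha (inv_ne_zero hb))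
    (by omega : 0 < m) hm hab
  have hba : a = u ^ 6 * b := by
    field_simp at hu6
    exact hu6.symm
  rw [hba, Aff_sextic hu]

lemma p_ge_11 (hp7 : 7 < p) : 11 ≤ p := by
  have hp := (Fact.out : p.Prime)
  have h8 : p ≠ 8 := by rintro rfl; norm_num at hp
  have h9 : p ≠ 9 := by rintro rfl; norm_num at hp
  have h10 : p ≠ 10 := by rintro rfl; norm_num at hp
  omega

lemma fiber_bound {k : ZMod p} (hk : k ≠ 0) (b : ZMod p) :
    (((Finset.univ.erase (0 : ZMod p))).filter fun u => u ^ 6 * k = b).card ≤ 6 := by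
  have hsub : (((Finset.univ.erase (0 : ZMod p))).filter fun u => u ^ 6 * k = b)
      ⊆ (Polynomial.nthRoots 6 (b * k⁻¹)).toFinset := by
    intro u hu
    rw [Finset.mem_filter] at hu
    rw [Multiset.mem_toFinset, Polynomial.mem_nthRoots (by norm_num : 0 < 6)]
    rw [← hu.2]
    field_simp
  calc (((Finset.univ.erase (0 : ZMod p))).filter fun u => u ^ 6 * k = b).card
      ≤ (Polynomial.nthRoots 6 (b * k⁻¹)).toFinset.card := Finset.card_le_card hsub
    _ ≤ Multiset.card (Polynomial.nthRoots 6 (b * k⁻¹)) := Multiset.toFinset_card_le _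
    _ ≤ 6 := Polynomial.card_nthRoots 6 _

lemma class_card {k : ZMod p} (hk : k ≠ 0) :
    p - 1 ≤ 6 * ((Finset.univ.erase (0 : ZMod p)).image fun u => u ^ 6 * k).card := by
  have := Finset.card_le_mul_card_image (f := fun u : ZMod p => u ^ 6 * k)
    (Finset.univ.erase (0 : ZMod p)) 6 (fun b _ => fiber_bound hk b)
  rwa [Finset.card_erase_of_mem (Finset.mem_univ _), Finset.card_univ, ZMod.card] at this

lemma no_A2 (h3 : p % 3 = 1) (hp7 : 7 < p) :
    ¬∃ k : ZMod p, k ≠ 0 ∧ IsSquare k ∧ (Aff p k).card = 2 := by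
  rintro ⟨k, hk, hsq, hA⟩
  have hp11 : 11 ≤ p := p_ge_11 hp7
  obtain ⟨d, hd⟩ := FiniteField.exists_nonsquare (F := ZMod p)
    (by rw [ZMod.ringChar_zmod_n]; omega)
  have hd0 : d ≠ 0 := fun h => hd (h ▸ ⟨0, by ring⟩)
  have hdk0 : d ^ 3 * k ≠ 0 := mul_ne_zero (pow_ne_zero _ hd0) hk
  have hA2 : (Aff p (d ^ 3 * k)).card = 2 * p - 2 := by
    have := Aff_twist hp7 hd k
    omega
  obtain ⟨c, hc⟩ := hsq
  have hc0 : c ≠ 0 := by rintro rfl; rw [hc] at hk; simp at hk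
  set C1 := (Finset.univ.erase (0 : ZMod p)).image (fun u => u ^ 6 * k) with hC1
  set C2 := (Finset.univ.erase (0 : ZMod p)).image (fun u => u ^ 6 * (d ^ 3 * k)) with hC2
  have hmem1 : ∀ k' ∈ C1, (Aff p k').card = 2 ∧ IsSquare k' := by
    intro k' hk'
    rw [hC1, Finset.mem_image] at hk'
    obtain ⟨u, hu, rfl⟩ := hk'
    have hu0 : u ≠ 0 := (Finset.mem_erase.mp hu).1
    refine ⟨by rw [Aff_sextic hu0, hA], ⟨u ^ 3 * c, by rw [hc]; ring⟩⟩
  have hmem2 : ∀ k' ∈ C2, (Aff p k').card = 2 * p - 2 ∧ ¬IsSquare k' := by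
    intro k' hk'
    rw [hC2, Finset.mem_image] at hk'
    obtain ⟨u, hu, rfl⟩ := hk'
    have hu0 : u ≠ 0 := (Finset.mem_erase.mp hu).1
    refine ⟨by rw [Aff_sextic hu0, hA2], ?_⟩
    rintro ⟨s, hs⟩
    apply hd
    have hne : u ^ 3 * c * d ≠ 0 := mul_ne_zero (mul_ne_zero (pow_ne_zero _ hu0) hc0) hd0
    refine ⟨s * (u ^ 3 * c * d)⁻¹, ?_⟩
    field_simp
    linear_combination hs - u ^ 6 * d ^ 3 * hc
  have hdisj : Disjoint C1 C2 := by
    rw [Finset.disjoint_left]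
    intro a h1 h2
    exact (hmem2 a h2).2 (hmem1 a h1).2
  have hsum_le : ∑ k' ∈ C1 ∪ C2, (((Aff p k').card : ℤ) - p) ^ 2
      ≤ ∑ k' : ZMod p, (((Aff p k').card : ℤ) - p) ^ 2 :=
    Finset.sum_le_sum_of_subset_of_nonneg (Finset.subset_univ _)
      (fun i _ _ => sq_nonneg _)
  rw [Finset.sum_union hdisj, var_Aff h3 hp7] at hsum_le
  have hs1 : ∑ k' ∈ C1, (((Aff p k').card : ℤ) - p) ^ 2
      = C1.card * ((p : ℤ) - 2) ^ 2 := by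
    have hterm : ∀ k' ∈ C1, (((Aff p k').card : ℤ) - p) ^ 2 = ((p : ℤ) - 2) ^ 2 := by
      intro k' hk'
      rw [(hmem1 k' hk').1]
      push_cast
      ring
    rw [Finset.sum_congr rfl hterm, Finset.sum_const, nsmul_eq_mul]
  have hs2 : ∑ k' ∈ C2, (((Aff p k').card : ℤ) - p) ^ 2
      = C2.card * ((p : ℤ) - 2) ^ 2 := by
    have hterm : ∀ k' ∈ C2, (((Aff p k').card : ℤ) - p) ^ 2 = ((p : ℤ) - 2) ^ 2 := by
      intro k' hk'
      rw [(hmem2 k' hk').1, Nat.cast_sub (by omega : 2 ≤ 2 * p)]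
      push_cast
      ring
    rw [Finset.sum_congr rfl hterm, Finset.sum_const, nsmul_eq_mul]
  rw [hs1, hs2] at hsum_le
  have hb1 := class_card hk
  have hb2 := class_card hdk0
  rw [← hC1] at hb1
  rw [← hC2] at hb2
  have hb1' : (p : ℤ) - 1 ≤ 6 * (C1.card : ℤ) := by
    have h1 : 1 ≤ p := by omega
    zify [h1] at hb1
    exact hb1
  have hb2' : (p : ℤ) - 1 ≤ 6 * (C2.card : ℤ) := by
    have h1 : 1 ≤ p := by omega
    zify [h1] at hb2
    exact hb2
  have hp11' : (11 : ℤ) ≤ (p : ℤ) := by exact_mod_cast hp11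
  nlinarith [mul_le_mul_of_nonneg_right hb1' (sq_nonneg ((p : ℤ) - 2)),
    mul_le_mul_of_nonneg_right hb2' (sq_nonneg ((p : ℤ) - 2)), sq_nonneg ((p : ℤ) - 2)]

/-- Corollary 2.6: for a prime `p > 7`, the set of primes `q` arising as the number of points of
some curve `y² = x³ + k` (`k ≠ 0`) over `F_p` has at most two elements, and every such prime `q`
satisfies `q ≡ 1 (mod 3)`. -/
theorem stmt_4 (p : ℕ) (hp : p.Prime) (hp7 : 7 < p) :
    {q : ℕ | q.Prime ∧ ∃ k : ZMod p, k ≠ 0 ∧ Npts p k = q}.encard ≤ 2 ∧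
      ∀ q ∈ {q : ℕ | q.Prime ∧ ∃ k : ZMod p, k ≠ 0 ∧ Npts p k = q}, q % 3 = 1 := by
  haveI : Fact p.Prime := ⟨hp⟩
  set S : Set ℕ := {q : ℕ | q.Prime ∧ ∃ k : ZMod p, k ≠ 0 ∧ Npts p k = q} with hS
  have hodd : p % 2 = 1 := by
    rcases hp.eq_two_or_odd with h | h
    · omega
    · exact h
  have h3cases : p % 3 = 1 ∨ p % 3 = 2 := by
    have h0 : p % 3 ≠ 0 := by
      intro h
      have h3dvd : (3 : ℕ) ∣ p := by omega
      have := (Nat.prime_dvd_prime_iff_eq Nat.prime_three hp).mp h3dvd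
      omega
    omega
  rcases h3cases with h3 | h3
  · -- p ≡ 1 mod 3
    have key : ∀ q ∈ S, ∃ k : ZMod p, k ≠ 0 ∧ ¬IsSquare k ∧ (¬∃ c : ZMod p, c ^ 3 = k) ∧
        (Aff p k).card + 1 = q ∧ q % 3 = 1 := by
      rintro q ⟨hq, k, hk, hN⟩
      rw [Npts_eq hp7 k hk] at hN
      have hnsq : ¬IsSquare k := by
        intro hsq
        have hmod := Aff_mod3 h3 hp7 k
        rw [nsq_eq hp7, if_neg hk, if_pos hsq] at hmod
        have h3q : (3 : ℕ) ∣ q := by omega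
        have hq3 : q = 3 := ((Nat.prime_dvd_prime_iff_eq Nat.prime_three hq).mp h3q).symm
        exact no_A2 h3 hp7 ⟨k, hk, hsq, by omega⟩
      have hmod := Aff_mod3 h3 hp7 k
      rw [nsq_eq hp7, if_neg hk, if_neg hnsq] at hmod
      have hncb : ¬∃ c : ZMod p, c ^ 3 = k := by
        rintro ⟨c, hc⟩
        have hm2 := Aff_mod2 hp7 k
        have hncbv : ncb p (-k) = 3 := by
          rw [ncb_eq h3 hp7, if_neg (neg_ne_zero.mpr hk),
            if_pos ⟨-c, by rw [← hc]; ring⟩]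
        rw [hncbv] at hm2
        have h2q : (2 : ℕ) ∣ q := by omega
        have hq2 : q = 2 := ((Nat.prime_dvd_prime_iff_eq Nat.prime_two hq).mp h2q).symm
        omega
      exact ⟨k, hk, hnsq, hncb, hN, by omega⟩
    constructor
    · by_contra hcard
      push_neg at hcard
      obtain ⟨a, b, haS, hbS, hab⟩ := Set.one_lt_encard_iff.mp (lt_trans (by norm_num : (1 : ℕ∞) < 2) hcard)
      have hthird : (S \ {a, b}).Nonempty := by
        by_contra hne
        rw [Set.not_nonempty_iff_eq_empty, Set.diff_eq_empty] at hne
        have : S.encard ≤ 2 := by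
          refine (Set.encard_le_encard hne).trans ?_
          refine (Set.encard_insert_le _ _).trans ?_
          rw [Set.encard_singleton]
          norm_num
        exact absurd this (not_le.mpr hcard)
      obtain ⟨c, hcS, hcab⟩ := hthird
      simp only [Set.mem_insert_iff, Set.mem_singleton_iff, not_or] at hcab
      obtain ⟨hca, hcb⟩ := hcab
      obtain ⟨ka, hka, hsa, hcba, hNa, -⟩ := key a haS
      obtain ⟨kb, hkb, hsb, hcbb, hNb, -⟩ := key b hbS
      obtain ⟨kc, hkc, hsc, hcbc, hNc, -⟩ := key c hcS
      have ra := phi_root hp7 h3 hka hsa hcba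
      have rb := phi_root hp7 h3 hkb hsb hcbb
      have rc := phi_root hp7 h3 hkc hsc hcbc
      rcases quad_two_eq ra rb rc with h | h | h
      · exact hab (by rw [← hNa, ← hNb, same_count hp7 h3 hka hkb h])
      · exact hca (by rw [← hNc, ← hNa, same_count hp7 h3 hkc hka h.symm])
      · exact hcb (by rw [← hNc, ← hNb, same_count hp7 h3 hkc hkb h.symm])
    · intro q hq
      exact (key q hq).choose_spec.2.2.2.2
  · -- p ≡ 2 mod 3 : the set is empty
    have hempty : S = ∅ := by
      ext q
      simp only [hS, Set.mem_setOf_eq, Set.mem_empty_iff_false, iff_false, not_and]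
      intro hq
      rintro ⟨k, hk, hN⟩
      rw [Npts_eq hp7 k hk, Aff_by_y] at hN
      have hA : ∑ y : ZMod p, ncb p (y ^ 2 - k) = p := by
        rw [Finset.sum_congr rfl fun y _ => ncb_one h3 _]
        simp [ZMod.card]
      rw [hA] at hN
      have h2q : (2 : ℕ) ∣ q := by omega
      have hq2 : q = 2 := ((Nat.prime_dvd_prime_iff_eq Nat.prime_two hq).mp h2q).symm
      omega
    rw [hempty]
    exact ⟨by simp, by simp⟩
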